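/- Let G be a finite abelian group and T' ⊆ G a tile of G. Suppose L ⊆ Ĝ satisfies #L · #T' = #G and λμ⁻¹ ∉ Z(χ̂_{T'}) for all distinct λ, μ ∈ L (where Z(χ̂_{T'}) is the set of characters at which χ̂_{T'} vanishes). Then L is a spectrum of every tiling complement T of T' (so L is a universal spectrum for T'). -/
import Mathlib


open scoped BigOperators

/-- If `T'` tiles the finite abelian group `G`, and `L ⊆ Ĝ` satisfies
`#L · #T' = #G` and `χ̂_{T'}(λμ⁻¹) ≠ 0` for all distinct `λ, μ ∈ L`, then `L` is a
spectrum of every tiling complement `T` of `T'` (a universal spectrum for `T'`). -/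
theorem stmt6 (G : Type*) [AddCommGroup G] [Fintype G]
    (T' : Finset G)
    (htile : ∃ T : Finset G, ∀ g : G, ∃! p : G × G, p.1 ∈ T' ∧ p.2 ∈ T ∧ p.1 + p.2 = g)
    (L : Finset (AddChar G ℂ))
    (hcard : L.card * T'.card = Fintype.card G)
    (hzero : ∀ lam ∈ L, ∀ mu ∈ L, lam ≠ mu → ∑ x ∈ T', (lam * mu⁻¹) x ≠ 0) :
    ∀ T : Finset G,
      (∀ g : G, ∃! p : G × G, p.1 ∈ T' ∧ p.2 ∈ T ∧ p.1 + p.2 = g) →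
      (L.card = T.card ∧
        ∀ lam ∈ L, ∀ mu ∈ L, lam ≠ mu → ∑ x ∈ T, (lam * mu⁻¹) x = 0) := by
  intro T hT
  -- the addition map is a bijection from T' ×ˢ T to G
  have hmem : ∀ p ∈ T' ×ˢ T, p.1 + p.2 ∈ (Finset.univ : Finset G) := by
    intro p _; exact Finset.mem_univ _
  have hinj : ∀ (p₁ : G × G), p₁ ∈ T' ×ˢ T → ∀ (p₂ : G × G), p₂ ∈ T' ×ˢ T →
      p₁.1 + p₁.2 = p₂.1 + p₂.2 → p₁ = p₂ := by
    intro p₁ hp₁ p₂ hp₂ h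
    rw [Finset.mem_product] at hp₁ hp₂
    obtain ⟨q, hq, huniq⟩ := hT (p₁.1 + p₁.2)
    rw [huniq p₁ ⟨hp₁.1, hp₁.2, rfl⟩, huniq p₂ ⟨hp₂.1, hp₂.2, h.symm⟩]
  have hsurj : ∀ g ∈ (Finset.univ : Finset G), ∃ p, ∃ hp : p ∈ T' ×ˢ T, p.1 + p.2 = g := by
    intro g _
    obtain ⟨q, ⟨hq1, hq2, hq3⟩, _⟩ := hT g
    exact ⟨q, Finset.mem_product.2 ⟨hq1, hq2⟩, hq3⟩
  -- key identity
  have key : ∀ χ : AddChar G ℂ, (∑ x ∈ T', χ x) * (∑ x ∈ T, χ x) = ∑ g : G, χ g := by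
    intro χ
    calc (∑ x ∈ T', χ x) * (∑ x ∈ T, χ x)
        = ∑ p ∈ T' ×ˢ T, χ (p.1 + p.2) := by
          rw [Finset.sum_mul_sum, ← Finset.sum_product']
          exact Finset.sum_congr rfl fun p _ => (AddChar.map_add_eq_mul χ p.1 p.2).symm
      _ = ∑ g : G, χ g :=
          Finset.sum_bij (fun p _ => p.1 + p.2) hmem hinj hsurj (fun p _ => rfl)
  have hcards : T'.card * T.card = Fintype.card G := by
    rw [← Finset.card_product, ← Finset.card_univ]
    exact Finset.card_bij (fun p _ => p.1 + p.2) hmem hinj hsurj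
  constructor
  · have hT'pos : 0 < T'.card := by
      rcases Nat.eq_zero_or_pos T'.card with h | h
      · exfalso
        rw [h, Nat.zero_mul] at hcards
        exact (Fintype.card_pos).ne' hcards.symm
      · exact h
    have : L.card * T'.card = T.card * T'.card := by
      rw [hcard, ← hcards, Nat.mul_comm]
    exact Nat.eq_of_mul_eq_mul_right hT'pos this
  · intro lam hlam mu hmu hne
    have hne1 : lam * mu⁻¹ ≠ 0 := by
      intro h
      exact hne (mul_inv_eq_one.mp h)
    have hsum : ∑ g : G, (lam * mu⁻¹) g = 0 := AddChar.sum_eq_zero_iff_ne_zero.mpr hne1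
    have := key (lam * mu⁻¹)
    rw [hsum] at this
    exact (mul_eq_zero.mp this).resolve_left (hzero lam hlam mu hmu hne)
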